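/- Let s be a nonempty set of negative integers, r the positive generator of the subgroup of ℤ generated by s, and χ : s ∪ {0} → ℂ* a function. Let H₋ be the Lie algebra with basis {d, T(n) : n ≤ 0}, [T(i),T(j)] = 0, [d,T(i)] = iT(i), and b = ℂh + ℂe with [h,e] = 2e. Define φ : H₋ → U(b) by φ(d) = −(r/2)h, φ(T(i)) = 0 for i ∉ s ∪ {0}, and φ(T(i)) = χ(i)e^{−i/r} for i ∈ s ∪ {0}. Then φ is a Lie algebra homomorphism from H₋ to U(b) (with commutator bracket), i.e., φ([x,y]) = [φ(x),φ(y)] for all x, y ∈ H₋. -/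

import Mathlib

open scoped Classical

attribute [local instance 100] LieRing.ofAssociativeRing

private lemma comm_pow_aux {A : Type*} [Ring A] [Algebra ℂ A] (x y : A)
    (hxy : x * y - y * x = (2 : ℂ) • y) (k : ℕ) :
    x * y ^ k - y ^ k * x = ((2 * k : ℂ)) • y ^ k := by
  induction k with
  | zero => simp
  | succ n ih =>
    have hx : x * y ^ n = y ^ n * x + ((2 * n : ℂ)) • y ^ n := by
      rw [← ih]; abel
    have hy : x * y = y * x + (2 : ℂ) • y := by rw [← hxy]; abel
    have : x * y ^ (n + 1) = (x * y ^ n) * y := by rw [pow_succ, mul_assoc]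
    rw [this, hx, add_mul, smul_mul_assoc, ← pow_succ]
    have : y ^ n * x * y = y ^ n * (y * x + (2 : ℂ) • y) := by
      rw [mul_assoc, hy]
    rw [this, mul_add, mul_smul_comm, ← mul_assoc, ← pow_succ]
    push_cast
    module

/-- the map `φ : H₋ → U(b)` with `φ(d) = −(r/2)h`,
`φ(T(i)) = χ(i) e^{−i/r}` for `i ∈ s ∪ {0}` and `φ(T(i)) = 0` otherwise is a Lie algebra
homomorphism, i.e. it preserves the defining brackets `[T(i),T(j)] = 0` and
`[d,T(i)] = iT(i)` of `H₋` inside `U(b)` with the commutator bracket. -/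
theorem stmt18 {b : Type*} [LieRing b] [LieAlgebra ℂ b]
    (h e : b) (hhe : ⁅h, e⁆ = (2 : ℂ) • e)
    (s : Set ℤ) (hs : s.Nonempty) (hneg : ∀ i ∈ s, i < 0)
    (r : ℤ) (hr : 0 < r)
    (hgen : AddSubgroup.closure s = AddSubgroup.zmultiples r)
    (χ : ℤ → ℂ) (hχ : ∀ i ∈ s ∪ {0}, χ i ≠ 0) :
    let ι : b →ₗ⁅ℂ⁆ UniversalEnvelopingAlgebra ℂ b := UniversalEnvelopingAlgebra.ι ℂ
    let Φd : UniversalEnvelopingAlgebra ℂ b := (-(r : ℂ) / 2) • ι h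
    let ΦT : ℤ → UniversalEnvelopingAlgebra ℂ b := fun i =>
      if i ∈ s ∪ {0} then χ i • (ι e) ^ ((-i) / r).toNat else 0
    (∀ i j : ℤ, i ≤ 0 → j ≤ 0 → ΦT i * ΦT j = ΦT j * ΦT i) ∧
    (∀ i : ℤ, i ≤ 0 → Φd * ΦT i - ΦT i * Φd = (i : ℂ) • ΦT i) := by
  intro ι Φd ΦT
  set x : UniversalEnvelopingAlgebra ℂ b := ι h with hxdef
  set y : UniversalEnvelopingAlgebra ℂ b := ι e with hydef
  have hbr : x * y - y * x = (2 : ℂ) • y := by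
    have := ι.map_lie h e
    rw [hhe] at this
    simpa [Ring.lie_def] using this.symm
  have hdvd : ∀ i ∈ s ∪ {0}, r ∣ i := by
    intro i hi
    have hmem : i ∈ AddSubgroup.zmultiples r := by
      rw [← hgen]
      rcases hi with hi | hi
      · exact AddSubgroup.subset_closure hi
      · simp only [Set.mem_singleton_iff] at hi
        rw [hi]; exact zero_mem _
    rcases AddSubgroup.mem_zmultiples_iff.mp hmem with ⟨k, hk⟩
    exact ⟨k, by rw [← hk]; simp [zsmul_eq_mul, mul_comm]⟩
  constructor
  · intro i j _ _
    simp only [ΦT]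
    split_ifs with hi hj hj
    · rw [smul_mul_smul_comm, smul_mul_smul_comm, ← pow_add, ← pow_add,
        add_comm, mul_comm]
    all_goals simp
  · intro i hi0
    simp only [ΦT, Φd]
    split_ifs with hi
    · set k : ℕ := ((-i) / r).toNat with hkdef
      have hkZ : (k : ℤ) = (-i) / r := by
        rw [hkdef, Int.toNat_of_nonneg (Int.ediv_nonneg (by omega) hr.le)]
      have hrk : r * (k : ℤ) = -i := by
        rw [hkZ]
        exact Int.mul_ediv_cancel' (by exact (dvd_neg).mpr (hdvd i hi))
      have hrkC : (r : ℂ) * (k : ℂ) = -(i : ℂ) := by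
        have := congrArg (fun n : ℤ => (n : ℂ)) hrk
        push_cast at this
        exact this
      have hc := comm_pow_aux x y hbr k
      rw [smul_mul_smul_comm, smul_mul_smul_comm, mul_comm (χ i), ← smul_sub]
      rw [hc, smul_smul, smul_smul]
      congr 1
      linear_combination (-(χ i)) * hrkC
    · simp
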